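/- Let d ≥ 7 be an odd integer and k̃ = ⌊(d+2)/4⌋. Suppose a_1,...,a_{k̃} are real numbers satisfying, for all 1 ≤ i, m ≤ k̃, ∑_{j=1}^{k̃} a_j (d - 2j)/(d + 2 - 2i - 2j) = ∑_{j=1}^{k̃} a_j (d - 2j)/(d + 2 - 2m - 2j). Then there exist positive constants c_1(d), c_2(d) depending only on d such that c_1(d) ∑_{j=1}^{k̃} a_j^2 ≤ (∑_{j=1}^{k̃} a_j)^2 ≤ c_2(d) ∑_{j=1}^{k̃} a_j^2. In fact, ∑_{j=1}^{k̃} a_j = a_1 ∏_{ℓ=1}^{k̃-1} (2ℓ)/(d - 2 - 2ℓ) and a_1^2 is comparable to ∑_j a_j^2. -/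

import Mathlib

noncomputable def vaux (d k j : ℕ) : ℝ :=
  -(∏ i ∈ Finset.Icc 1 k, (2*(j:ℝ) - ((d:ℝ)+2-2*(i:ℝ)))) /
    (((d:ℝ) - 2*(j:ℝ)) * ∏ j' ∈ (Finset.Icc 1 k).erase j, (2*(j:ℝ) - 2*(j':ℝ)))


section aux
variable {d : ℕ}


lemma hden (hd : Odd d) (i j : ℕ) : ((d:ℝ) + 2 - 2*(i:ℝ) - 2*(j:ℝ)) ≠ 0 := by
  intro h
  have h' : (d:ℤ) + 2 - 2*(i:ℤ) - 2*(j:ℤ) = 0 := by exact_mod_cast h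
  obtain ⟨t, ht⟩ := hd; omega

lemma hdj (hd : Odd d) (j : ℕ) : ((d:ℝ) - 2*(j:ℝ)) ≠ 0 := by
  intro h
  have h' : (d:ℤ) - 2*(j:ℤ) = 0 := by exact_mod_cast h
  obtain ⟨t, ht⟩ := hd; omega

lemma hdl (hd : Odd d) (ℓ : ℕ) : ((d:ℝ) - 2 - 2*(ℓ:ℝ)) ≠ 0 := by
  intro h
  have h' : (d:ℤ) - 2 - 2*(ℓ:ℤ) = 0 := by exact_mod_cast h
  obtain ⟨t, ht⟩ := hd; omega

lemma hnum (hd : Odd d) (i j : ℕ) : (2*(j:ℝ) - ((d:ℝ)+2-2*(i:ℝ))) ≠ 0 := by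
  intro h; exact hden hd i j (by linarith)

lemma hne2 {j j' : ℕ} (h : j ≠ j') : (2*(j:ℝ) - 2*(j':ℝ)) ≠ 0 := by
  intro hc; exact h (by exact_mod_cast (by linarith : (j:ℝ) = (j':ℝ)))

lemma vaux_ne (hd : Odd d) (k j : ℕ) : vaux d k j ≠ 0 := by
  unfold vaux
  apply div_ne_zero
  · exact neg_ne_zero.2 (Finset.prod_ne_zero_iff.2 fun i _ => hnum hd i j)
  · exact mul_ne_zero (hdj hd j)
      (Finset.prod_ne_zero_iff.2 fun j' hj' => hne2 (Finset.mem_erase.1 hj').1.symm)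

lemma v1_prod (hd : Odd d) {k : ℕ} (hk1 : 1 ≤ k) :
    vaux d k 1 * ∏ ℓ ∈ Finset.Icc 1 (k-1), (2*(ℓ:ℝ)) / ((d:ℝ) - 2 - 2*(ℓ:ℝ)) = 1 := by
  have herase : (Finset.Icc 1 k).erase 1 = Finset.Icc 2 k := by
    ext x; simp only [Finset.mem_erase, Finset.mem_Icc]; omega
  have hmap : ∀ f : ℕ → ℝ, ∏ x ∈ Finset.Icc 2 k, f x = ∏ ℓ ∈ Finset.Icc 1 (k-1), f (ℓ+1) := by
    intro f
    have h : Finset.Icc 2 k = (Finset.Icc 1 (k-1)).image (· + 1) := by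
      ext x; simp only [Finset.mem_image, Finset.mem_Icc]; constructor
      · intro hx; exact ⟨x - 1, by omega, by omega⟩
      · rintro ⟨y, hy, rfl⟩; omega
    rw [h, Finset.prod_image (by intro x _ y _ h; simp only at h; omega)]
  have hsplit : Finset.Icc 1 k = insert 1 (Finset.Icc 2 k) := by
    ext x; simp only [Finset.mem_insert, Finset.mem_Icc]; omega
  have h1not : (1:ℕ) ∉ Finset.Icc 2 k := by simp
  unfold vaux
  rw [herase, hsplit, Finset.prod_insert h1not, hmap, hmap]
  have e1 : ∀ ℓ ∈ Finset.Icc 1 (k-1), (2*((1:ℕ):ℝ) - ((d:ℝ)+2-2*(((ℓ+1):ℕ):ℝ)))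
      = -(((d:ℝ) - 2 - 2*(ℓ:ℝ))) := by intro ℓ _; push_cast; ring
  have e2 : ∀ ℓ ∈ Finset.Icc 1 (k-1), (2*((1:ℕ):ℝ) - 2*(((ℓ+1):ℕ):ℝ)) = -(2*(ℓ:ℝ)) := by
    intro ℓ _; push_cast; ring
  rw [Finset.prod_congr rfl e1, Finset.prod_congr rfl e2]
  have hPQ : (∏ ℓ ∈ Finset.Icc 1 (k-1), -(((d:ℝ) - 2 - 2*(ℓ:ℝ))))
      * (∏ ℓ ∈ Finset.Icc 1 (k-1), (2*(ℓ:ℝ)) / ((d:ℝ) - 2 - 2*(ℓ:ℝ)))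
      = ∏ ℓ ∈ Finset.Icc 1 (k-1), -(2*(ℓ:ℝ)) := by
    rw [← Finset.prod_mul_distrib]
    refine Finset.prod_congr rfl fun ℓ _ => ?_
    field_simp [hdl hd ℓ]
  have hP2 : (∏ ℓ ∈ Finset.Icc 1 (k-1), -(2*(ℓ:ℝ))) ≠ 0 := by
    refine Finset.prod_ne_zero_iff.2 fun ℓ hℓ => ?_
    have : 1 ≤ ℓ := (Finset.mem_Icc.1 hℓ).1
    have : (1:ℝ) ≤ (ℓ:ℝ) := by exact_mod_cast this
    intro hc; nlinarith
  rw [div_mul_eq_mul_div]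
  rw [show -((2*((1:ℕ):ℝ) - ((d:ℝ)+2-2*((1:ℕ):ℝ))) * ∏ ℓ ∈ Finset.Icc 1 (k-1), -(((d:ℝ) - 2 - 2*(ℓ:ℝ))))
      * (∏ ℓ ∈ Finset.Icc 1 (k-1), (2*(ℓ:ℝ)) / ((d:ℝ) - 2 - 2*(ℓ:ℝ)))
      = ((d:ℝ) - 2*((1:ℕ):ℝ)) * ((∏ ℓ ∈ Finset.Icc 1 (k-1), -(((d:ℝ) - 2 - 2*(ℓ:ℝ))))
        * (∏ ℓ ∈ Finset.Icc 1 (k-1), (2*(ℓ:ℝ)) / ((d:ℝ) - 2 - 2*(ℓ:ℝ)))) by push_cast; ring, hPQ]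
  exact div_self (mul_ne_zero (hdj hd 1) hP2)


open Polynomial in
lemma key_rep (hd : Odd d) {k : ℕ} (hk1 : 1 ≤ k) (a : ℕ → ℝ)
    (ha : ∀ i ∈ Finset.Icc 1 k, ∀ m ∈ Finset.Icc 1 k,
      ∑ j ∈ Finset.Icc 1 k, a j * ((d:ℝ) - 2*(j:ℝ)) / ((d:ℝ)+2-2*(i:ℝ)-2*(j:ℝ))
        = ∑ j ∈ Finset.Icc 1 k, a j * ((d:ℝ) - 2*(j:ℝ)) / ((d:ℝ)+2-2*(m:ℝ)-2*(j:ℝ))) :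
    ∀ j ∈ Finset.Icc 1 k, a j = (∑ j ∈ Finset.Icc 1 k, a j) * vaux d k j := by
  classical
  set s : Finset ℕ := Finset.Icc 1 k with hs
  have hmem1 : 1 ∈ s := Finset.mem_Icc.2 ⟨le_refl 1, hk1⟩
  have hcard_s : s.card = k := by simp [hs, Nat.card_Icc]
  set Cs : ℝ := ∑ j ∈ s, a j with hCsdef
  -- the hypothesis sum is constant = Cs
  have hCs : ∀ m ∈ s, (∑ j ∈ s, a j * ((d:ℝ) - 2*(j:ℝ)) / ((d:ℝ)+2-2*(m:ℝ)-2*(j:ℝ))) = Cs := by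
    intro m hm
    rw [ha m hm 1 hmem1, hCsdef]
    refine Finset.sum_congr rfl fun j hj => ?_
    rw [show (d:ℝ) + 2 - 2*((1:ℕ):ℝ) - 2*(j:ℝ) = (d:ℝ) - 2*(j:ℝ) by push_cast; ring,
      mul_div_assoc, div_self (hdj hd j), mul_one]
  -- polynomials
  set Np : ℝ[X] := ∏ j ∈ s, (X - C (2*(j:ℝ))) with hNp
  set Pp : ℝ[X] := ∏ i ∈ s, (X - C ((d:ℝ)+2-2*(i:ℝ))) with hPp
  set Ap : ℝ[X] := ∑ j ∈ s, C (a j * ((d:ℝ) - 2*(j:ℝ))) * ∏ j' ∈ s.erase j, (X - C (2*(j':ℝ)))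
    with hAp
  have hNmonic : Np.Monic := monic_prod_of_monic _ _ fun _ _ => monic_X_sub_C _
  have hPmonic : Pp.Monic := monic_prod_of_monic _ _ fun _ _ => monic_X_sub_C _
  have hNdeg : Np.natDegree = k := by
    rw [hNp, natDegree_prod_of_monic _ _ fun _ _ => monic_X_sub_C _,
      Finset.sum_congr rfl fun x _ => natDegree_X_sub_C (R := ℝ) _]
    simp [hcard_s]
  have hPdeg : Pp.natDegree = k := by
    rw [hPp, natDegree_prod_of_monic _ _ fun _ _ => monic_X_sub_C _,
      Finset.sum_congr rfl fun x _ => natDegree_X_sub_C (R := ℝ) _]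
    simp [hcard_s]
  have hAeval : ∀ x : ℝ, Ap.eval x
      = ∑ j ∈ s, (a j * ((d:ℝ)-2*(j:ℝ))) * ∏ j' ∈ s.erase j, (x - 2*(j':ℝ)) := by
    intro x
    rw [hAp, eval_finset_sum]
    refine Finset.sum_congr rfl fun j hj => ?_
    rw [eval_mul, eval_C, eval_prod]
    simp
  have hNeval : ∀ x : ℝ, Np.eval x = ∏ j ∈ s, (x - 2*(j:ℝ)) := by
    intro x; rw [hNp, eval_prod]; simp
  have hPeval : ∀ x : ℝ, Pp.eval x = ∏ i ∈ s, (x - ((d:ℝ)+2-2*(i:ℝ))) := by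
    intro x; rw [hPp, eval_prod]; simp
  -- key evaluation at the nodes d+2-2m
  have key1 : ∀ m ∈ s, Ap.eval ((d:ℝ)+2-2*(m:ℝ)) = Cs * Np.eval ((d:ℝ)+2-2*(m:ℝ)) := by
    intro m hm
    rw [hAeval, hNeval]
    have hx : ∀ j : ℕ, ((d:ℝ)+2-2*(m:ℝ)) - 2*(j:ℝ) ≠ 0 := by
      intro j hc; exact hden hd m j (by linarith)
    calc ∑ j ∈ s, (a j * ((d:ℝ)-2*(j:ℝ))) * ∏ j' ∈ s.erase j, (((d:ℝ)+2-2*(m:ℝ)) - 2*(j':ℝ))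
        = ∑ j ∈ s, (a j * ((d:ℝ)-2*(j:ℝ)) / (((d:ℝ)+2-2*(m:ℝ)) - 2*(j:ℝ)))
            * ∏ j' ∈ s, (((d:ℝ)+2-2*(m:ℝ)) - 2*(j':ℝ)) := by
          refine Finset.sum_congr rfl fun j hj => ?_
          rw [← Finset.mul_prod_erase s (fun j' => ((d:ℝ)+2-2*(m:ℝ)) - 2*(j':ℝ)) hj,
            div_mul_eq_mul_div,
            mul_comm (((d:ℝ)+2-2*(m:ℝ)) - 2*(j:ℝ))
              (∏ j' ∈ s.erase j, (((d:ℝ)+2-2*(m:ℝ)) - 2*(j':ℝ))),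
            ← mul_assoc, mul_div_assoc, div_self (hx j), mul_one]
      _ = (∑ j ∈ s, a j * ((d:ℝ)-2*(j:ℝ)) / (((d:ℝ)+2-2*(m:ℝ)) - 2*(j:ℝ)))
            * ∏ j' ∈ s, (((d:ℝ)+2-2*(m:ℝ)) - 2*(j':ℝ)) := by rw [Finset.sum_mul]
      _ = Cs * ∏ j' ∈ s, (((d:ℝ)+2-2*(m:ℝ)) - 2*(j':ℝ)) := by
          rw [hCs m hm]
  have hBeval : ∀ m ∈ s, (Ap - C Cs * (Np - Pp)).eval ((d:ℝ)+2-2*(m:ℝ)) = 0 := by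
    intro m hm
    have hP0 : Pp.eval ((d:ℝ)+2-2*(m:ℝ)) = 0 := by
      rw [hPeval]
      exact Finset.prod_eq_zero hm (by ring)
    rw [eval_sub, eval_mul, eval_C, eval_sub, key1 m hm, hP0]
    ring
  -- degree bound
  have hAdeg : Ap.natDegree ≤ k - 1 := by
    rw [hAp]
    apply natDegree_sum_le_of_forall_le
    intro j hj
    refine (natDegree_C_mul_le _ _).trans ?_
    rw [natDegree_prod_of_monic _ _ fun _ _ => monic_X_sub_C _,
      Finset.sum_congr rfl fun x _ => natDegree_X_sub_C (R := ℝ) _]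
    simp [Finset.card_erase_of_mem hj, hcard_s]
  have hNP : (Np - Pp).natDegree ≤ k - 1 := by
    rcases eq_or_ne Np Pp with h | h
    · simp [h]
    · have hdeg : (Np - Pp).degree < (k : ℕ) := by
        have h1 : Np.degree = Pp.degree := by
          rw [degree_eq_natDegree hNmonic.ne_zero, degree_eq_natDegree hPmonic.ne_zero,
            hNdeg, hPdeg]
        have := degree_sub_lt h1 hNmonic.ne_zero
          (hNmonic.leadingCoeff.trans hPmonic.leadingCoeff.symm)
        rwa [degree_eq_natDegree hNmonic.ne_zero, hNdeg] at this
      have hne0 : Np - Pp ≠ 0 := sub_ne_zero.2 h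
      have := (natDegree_lt_iff_degree_lt hne0).2 hdeg
      omega
  have hBdeg : (Ap - C Cs * (Np - Pp)).natDegree < k := by
    have h1 := natDegree_sub_le Ap (C Cs * (Np - Pp))
    have h2 : (C Cs * (Np - Pp)).natDegree ≤ k - 1 := (natDegree_C_mul_le _ _).trans hNP
    omega
  -- zero polynomial
  have hB0 : Ap - C Cs * (Np - Pp) = 0 := by
    apply eq_zero_of_natDegree_lt_card_of_eval_eq_zero' _
      (s.image fun m : ℕ => (d:ℝ)+2-2*(m:ℝ))
    · intro x hx
      obtain ⟨m, hm, rfl⟩ := Finset.mem_image.1 hx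
      exact hBeval m hm
    · rw [Finset.card_image_of_injOn, hcard_s]
      · exact hBdeg
      · intro x _ y _ hxy
        simp only at hxy
        exact_mod_cast (by linarith : (x:ℝ) = (y:ℝ))
  have hAP : Ap = C Cs * (Np - Pp) := by rwa [sub_eq_zero] at hB0
  -- evaluate at 2j
  intro j hj
  have hAj : Ap.eval (2*(j:ℝ))
      = (a j * ((d:ℝ)-2*(j:ℝ))) * ∏ j' ∈ s.erase j, (2*(j:ℝ) - 2*(j':ℝ)) := by
    rw [hAeval]
    apply Finset.sum_eq_single_of_mem j hj
    intro j'' hj'' hne'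
    have hjmem : j ∈ s.erase j'' := Finset.mem_erase.2 ⟨fun h => hne' h.symm, hj⟩
    rw [Finset.prod_eq_zero hjmem (by ring), mul_zero]
  have hNj : Np.eval (2*(j:ℝ)) = 0 := by
    rw [hNeval]; exact Finset.prod_eq_zero hj (by ring)
  have heq := congrArg (Polynomial.eval (2*(j:ℝ))) hAP
  rw [eval_mul, eval_C, eval_sub, hAj, hNj, hPeval] at heq
  have hD : (∏ j' ∈ s.erase j, (2*(j:ℝ) - 2*(j':ℝ))) ≠ 0 :=
    Finset.prod_ne_zero_iff.2 fun j' hj' => hne2 (Finset.mem_erase.1 hj').1.symm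
  rw [show vaux d k j = -(∏ i ∈ s, (2*(j:ℝ) - ((d:ℝ)+2-2*(i:ℝ)))) /
      (((d:ℝ) - 2*(j:ℝ)) * ∏ j' ∈ s.erase j, (2*(j:ℝ) - 2*(j':ℝ))) from rfl]
  rw [mul_div_assoc', eq_div_iff (mul_ne_zero (hdj hd j) hD)]
  linear_combination heq

end aux


/-- Let `d ≥ 7` be odd and `k̃ = ⌊(d+2)/4⌋`. If `a 1, …, a k̃` satisfy that
`∑_j a j (d - 2j)/(d + 2 - 2i - 2j)` is independent of `i ∈ [1, k̃]`, then
`(∑ a j)²` is comparable to `∑ (a j)²` with constants depending only on `d`;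
moreover `∑ a j = a 1 ∏_{ℓ=1}^{k̃-1} (2ℓ)/(d - 2 - 2ℓ)` and `(a 1)²` is
comparable to `∑ (a j)²`. -/
theorem a_comparability (d : ℕ) (hd : Odd d) (hd7 : 7 ≤ d) :
    ∃ c₁ c₂ : ℝ, 0 < c₁ ∧ 0 < c₂ ∧
      ∀ a : ℕ → ℝ,
        (∀ i ∈ Finset.Icc 1 ((d + 2) / 4), ∀ m ∈ Finset.Icc 1 ((d + 2) / 4),
          ∑ j ∈ Finset.Icc 1 ((d + 2) / 4),
              a j * ((d : ℝ) - 2 * (j : ℝ)) / ((d : ℝ) + 2 - 2 * (i : ℝ) - 2 * (j : ℝ)) =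
            ∑ j ∈ Finset.Icc 1 ((d + 2) / 4),
              a j * ((d : ℝ) - 2 * (j : ℝ)) / ((d : ℝ) + 2 - 2 * (m : ℝ) - 2 * (j : ℝ))) →
        (c₁ * ∑ j ∈ Finset.Icc 1 ((d + 2) / 4), (a j) ^ 2 ≤
            (∑ j ∈ Finset.Icc 1 ((d + 2) / 4), a j) ^ 2 ∧
          (∑ j ∈ Finset.Icc 1 ((d + 2) / 4), a j) ^ 2 ≤
            c₂ * ∑ j ∈ Finset.Icc 1 ((d + 2) / 4), (a j) ^ 2 ∧
          (∑ j ∈ Finset.Icc 1 ((d + 2) / 4), a j) =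
            a 1 * ∏ ℓ ∈ Finset.Icc 1 ((d + 2) / 4 - 1),
              (2 * (ℓ : ℝ)) / ((d : ℝ) - 2 - 2 * (ℓ : ℝ)) ∧
          c₁ * ∑ j ∈ Finset.Icc 1 ((d + 2) / 4), (a j) ^ 2 ≤ (a 1) ^ 2 ∧
          (a 1) ^ 2 ≤ c₂ * ∑ j ∈ Finset.Icc 1 ((d + 2) / 4), (a j) ^ 2) := by
  set k := (d + 2) / 4 with hk
  have hk1 : 1 ≤ k := by omega
  have hmem1 : 1 ∈ Finset.Icc 1 k := Finset.mem_Icc.2 ⟨le_refl 1, hk1⟩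
  set S : ℝ := ∑ j ∈ Finset.Icc 1 k, (vaux d k j)^2 with hSdef
  have hv1 : vaux d k 1 ≠ 0 := vaux_ne hd k 1
  have hv1sq : 0 < (vaux d k 1)^2 := lt_of_le_of_ne (sq_nonneg _) (Ne.symm (pow_ne_zero 2 hv1))
  have hS : 0 < S := by
    refine Finset.sum_pos' (fun j _ => sq_nonneg _) ⟨1, hmem1, hv1sq⟩
  refine ⟨min 1 ((vaux d k 1)^2) / S, max 1 ((vaux d k 1)^2) / S,
    div_pos (lt_min one_pos hv1sq) hS,
    div_pos (lt_of_lt_of_le one_pos (le_max_left _ _)) hS, ?_⟩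
  intro a ha
  have key := key_rep hd hk1 a ha
  have ha1 : a 1 = (∑ j ∈ Finset.Icc 1 k, a j) * vaux d k 1 := key 1 hmem1
  have hsq : ∑ j ∈ Finset.Icc 1 k, (a j)^2 = (∑ j ∈ Finset.Icc 1 k, a j)^2 * S := by
    rw [hSdef, Finset.mul_sum]
    refine Finset.sum_congr rfl fun j hj => ?_
    rw [key j hj]; ring
  have e1 : min 1 ((vaux d k 1)^2) / S * S = min 1 ((vaux d k 1)^2) :=
    div_mul_cancel₀ _ hS.ne'
  have e2 : max 1 ((vaux d k 1)^2) / S * S = max 1 ((vaux d k 1)^2) :=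
    div_mul_cancel₀ _ hS.ne'
  set Cs : ℝ := ∑ j ∈ Finset.Icc 1 k, a j with hCs
  refine ⟨?_, ?_, ?_, ?_, ?_⟩
  · calc min 1 ((vaux d k 1)^2) / S * ∑ j ∈ Finset.Icc 1 k, (a j)^2
        = (min 1 ((vaux d k 1)^2) / S * S) * Cs^2 := by rw [hsq]; ring
      _ = min 1 ((vaux d k 1)^2) * Cs^2 := by rw [e1]
      _ ≤ 1 * Cs^2 := mul_le_mul_of_nonneg_right (min_le_left _ _) (sq_nonneg _)
      _ = Cs^2 := one_mul _
  · calc Cs^2 = 1 * Cs^2 := (one_mul _).symm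
      _ ≤ max 1 ((vaux d k 1)^2) * Cs^2 :=
          mul_le_mul_of_nonneg_right (le_max_left _ _) (sq_nonneg _)
      _ = (max 1 ((vaux d k 1)^2) / S * S) * Cs^2 := by rw [e2]
      _ = max 1 ((vaux d k 1)^2) / S * ∑ j ∈ Finset.Icc 1 k, (a j)^2 := by rw [hsq]; ring
  · rw [ha1, mul_assoc, v1_prod hd hk1, mul_one]
  · calc min 1 ((vaux d k 1)^2) / S * ∑ j ∈ Finset.Icc 1 k, (a j)^2
        = (min 1 ((vaux d k 1)^2) / S * S) * Cs^2 := by rw [hsq]; ring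
      _ = min 1 ((vaux d k 1)^2) * Cs^2 := by rw [e1]
      _ ≤ (vaux d k 1)^2 * Cs^2 := mul_le_mul_of_nonneg_right (min_le_right _ _) (sq_nonneg _)
      _ = (a 1)^2 := by rw [ha1]; ring
  · calc (a 1)^2 = (vaux d k 1)^2 * Cs^2 := by rw [ha1]; ring
      _ ≤ max 1 ((vaux d k 1)^2) * Cs^2 :=
          mul_le_mul_of_nonneg_right (le_max_right _ _) (sq_nonneg _)
      _ = (max 1 ((vaux d k 1)^2) / S * S) * Cs^2 := by rw [e2]
      _ = max 1 ((vaux d k 1)^2) / S * ∑ j ∈ Finset.Icc 1 k, (a j)^2 := by rw [hsq]; ring
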